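/- Let d ≠ 0, f, ζ ∈ ℝ and let a = (a₁, a₂) ∈ C²([0,2π], ℝ²) be a 2π-periodic solution of the system -d a₁'' = -a₂ - ζ a₁ + (a₁²+a₂²) a₁, -d a₂'' = a₁ - ζ a₂ + (a₁²+a₂²) a₂ - f. Then the L² norm of a over [0,2π] satisfies ‖a‖_{L²} ≤ √(2π) |f|. -/

import Mathlib

open Real intervalIntegral

theorem stmt_0 (d ζ f : ℝ) (hd : d ≠ 0) (a1 a2 : ℝ → ℝ)
    (ha1 : ContDiff ℝ 2 a1) (ha2 : ContDiff ℝ 2 a2)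
    (hp1 : Function.Periodic a1 (2 * π)) (hp2 : Function.Periodic a2 (2 * π))
    (heq1 : ∀ x, -d * deriv (deriv a1) x
      = -(a2 x) - ζ * a1 x + (a1 x ^ 2 + a2 x ^ 2) * a1 x)
    (heq2 : ∀ x, -d * deriv (deriv a2) x
      = a1 x - ζ * a2 x + (a1 x ^ 2 + a2 x ^ 2) * a2 x - f) :
    Real.sqrt (∫ x in (0:ℝ)..(2 * π), (a1 x ^ 2 + a2 x ^ 2))
      ≤ Real.sqrt (2 * π) * |f| := by
  have hπ : (0:ℝ) < 2 * π := by positivity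
  -- basic regularity
  have hda1 : Differentiable ℝ a1 := ha1.differentiable (by norm_num)
  have hda2 : Differentiable ℝ a2 := ha2.differentiable (by norm_num)
  have hc1 : ContDiff ℝ 1 (deriv a1) := by
    have := (contDiff_succ_iff_deriv.mp (show ContDiff ℝ (1 + 1) a1 by norm_num [ha1]))
    exact this.2.2
  have hc2 : ContDiff ℝ 1 (deriv a2) := by
    have := (contDiff_succ_iff_deriv.mp (show ContDiff ℝ (1 + 1) a2 by norm_num [ha2]))
    exact this.2.2
  have hda1' : Differentiable ℝ (deriv a1) := hc1.differentiable one_ne_zero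
  have hda2' : Differentiable ℝ (deriv a2) := hc2.differentiable one_ne_zero
  have hcont1 : Continuous a1 := ha1.continuous
  have hcont2 : Continuous a2 := ha2.continuous
  have hcont1' : Continuous (deriv a1) := hc1.continuous
  have hcont2' : Continuous (deriv a2) := hc2.continuous
  have hcont1'' : Continuous (deriv (deriv a1)) := hc1.continuous_deriv le_rfl
  have hcont2'' : Continuous (deriv (deriv a2)) := hc2.continuous_deriv le_rfl
  -- periodicity of first derivatives
  have hpd1 : Function.Periodic (deriv a1) (2 * π) := by
    intro x
    have : deriv (fun y => a1 (y + 2 * π)) x = deriv a1 (x + 2 * π) :=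
      deriv_comp_add_const a1 _ x
    rw [show (fun y => a1 (y + 2 * π)) = a1 from funext hp1] at this
    exact this.symm
  have hpd2 : Function.Periodic (deriv a2) (2 * π) := by
    intro x
    have : deriv (fun y => a2 (y + 2 * π)) x = deriv a2 (x + 2 * π) :=
      deriv_comp_add_const a2 _ x
    rw [show (fun y => a2 (y + 2 * π)) = a2 from funext hp2] at this
    exact this.symm
  -- Wronskian-type function
  set W : ℝ → ℝ := fun x => deriv a1 x * a2 x - deriv a2 x * a1 x with hW
  have hWderiv : ∀ x, HasDerivAt W
      (deriv (deriv a1) x * a2 x - deriv (deriv a2) x * a1 x) x := by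
    intro x
    have h1 : HasDerivAt (fun y => deriv a1 y * a2 y)
        (deriv (deriv a1) x * a2 x + deriv a1 x * deriv a2 x) x :=
      ((hda1' x).hasDerivAt).mul ((hda2 x).hasDerivAt)
    have h2 : HasDerivAt (fun y => deriv a2 y * a1 y)
        (deriv (deriv a2) x * a1 x + deriv a2 x * deriv a1 x) x :=
      ((hda2' x).hasDerivAt).mul ((hda1 x).hasDerivAt)
    have : HasDerivAt W (deriv (deriv a1) x * a2 x + deriv a1 x * deriv a2 x - (deriv (deriv a2) x * a1 x + deriv a2 x * deriv a1 x)) x := h1.sub h2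
    convert this using 1
    ring
  -- the integral of W' over a period vanishes
  have hWint : (∫ x in (0:ℝ)..(2 * π),
      (deriv (deriv a1) x * a2 x - deriv (deriv a2) x * a1 x)) = 0 := by
    rw [intervalIntegral.integral_eq_sub_of_hasDerivAt
      (fun x _ => hWderiv x)
      (((hcont1''.mul hcont2).sub (hcont2''.mul hcont1)).intervalIntegrable _ _)]
    have e1 : W (2 * π) = W 0 := by
      simp only [hW]
      rw [show (2 * π) = 0 + 2 * π by ring, hp1 0, hp2 0, hpd1 0, hpd2 0]
    rw [e1, sub_self]
  -- pointwise algebraic identity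
  have hpt : ∀ x, d * (deriv (deriv a1) x * a2 x - deriv (deriv a2) x * a1 x)
      = (a1 x ^ 2 + a2 x ^ 2) - f * a1 x := by
    intro x
    have h1 := heq1 x
    have h2 := heq2 x
    linear_combination (-(a2 x)) * h1 + a1 x * h2
  -- integrability facts
  have int_sq : IntervalIntegrable (fun x => a1 x ^ 2 + a2 x ^ 2) MeasureTheory.volume 0 (2 * π) :=
    (((hcont1.pow 2).add (hcont2.pow 2))).intervalIntegrable _ _
  have int_fa1 : IntervalIntegrable (fun x => f * a1 x) MeasureTheory.volume 0 (2 * π) :=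
    ((continuous_const.mul hcont1)).intervalIntegrable _ _
  -- the key identity : ∫ |a|² = ∫ f a1
  have hkey : (∫ x in (0:ℝ)..(2 * π), (a1 x ^ 2 + a2 x ^ 2))
      = ∫ x in (0:ℝ)..(2 * π), f * a1 x := by
    have h0 : (∫ x in (0:ℝ)..(2 * π),
        ((a1 x ^ 2 + a2 x ^ 2) - f * a1 x)) = 0 := by
      have : (∫ x in (0:ℝ)..(2 * π),
          ((a1 x ^ 2 + a2 x ^ 2) - f * a1 x))
          = ∫ x in (0:ℝ)..(2 * π),
            d * (deriv (deriv a1) x * a2 x - deriv (deriv a2) x * a1 x) := by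
        apply intervalIntegral.integral_congr
        intro x _
        exact (hpt x).symm
      rw [this, intervalIntegral.integral_const_mul, hWint, mul_zero]
    have := intervalIntegral.integral_sub int_sq int_fa1
    rw [h0] at this
    linarith [this]
  set I := ∫ x in (0:ℝ)..(2 * π), (a1 x ^ 2 + a2 x ^ 2) with hI
  have hInonneg : 0 ≤ I := by
    apply intervalIntegral.integral_nonneg (le_of_lt hπ)
    intro x _
    positivity
  -- bound ∫ f a1 by Young's inequality pointwise
  have hbound : (∫ x in (0:ℝ)..(2 * π), f * a1 x)
      ≤ ∫ x in (0:ℝ)..(2 * π), (f ^ 2 / 2 + (a1 x ^ 2 + a2 x ^ 2) / 2) := by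
    apply intervalIntegral.integral_mono_on (le_of_lt hπ) int_fa1
    · exact (continuous_const.add (((hcont1.pow 2).add (hcont2.pow 2)).div_const 2)).intervalIntegrable _ _
    · intro x _
      nlinarith [sq_nonneg (f - a1 x), sq_nonneg (a2 x)]
  have hsplit : (∫ x in (0:ℝ)..(2 * π), (f ^ 2 / 2 + (a1 x ^ 2 + a2 x ^ 2) / 2))
      = π * f ^ 2 + I / 2 := by
    rw [intervalIntegral.integral_add
      (intervalIntegrable_const)
      (show IntervalIntegrable (fun x => (a1 x ^ 2 + a2 x ^ 2) / 2) MeasureTheory.volume 0 (2 * π) from (((hcont1.pow 2).add (hcont2.pow 2)).div_const 2).intervalIntegrable _ _)]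
    rw [intervalIntegral.integral_const, intervalIntegral.integral_div]
    simp only [smul_eq_mul, ← hI]
    ring
  have hIle : I ≤ 2 * π * f ^ 2 := by
    have := hkey.trans_le hbound
    rw [hsplit] at this
    linarith
  calc Real.sqrt I ≤ Real.sqrt (2 * π * f ^ 2) := Real.sqrt_le_sqrt hIle
    _ = Real.sqrt (2 * π) * |f| := by
        rw [Real.sqrt_mul (le_of_lt hπ), Real.sqrt_sq_eq_abs]
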